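/- Let (V,Q₁) be a metric vector space with V^{⊥₁} = {0}, and suppose that neither (dim V = 1 and |F| = 3) nor (dim V = 2 and |F| = 2) holds. If a quadratic form Q₂ : V → F satisfies O(V,Q₁) = O(V,Q₂) or O(V,Q₁) = O'(V,Q₂), then Q₁ = c·Q₂ for some c ∈ F^×. -/

import Mathlib

set_option linter.unusedSectionVars false


/-! Setting: a field `F`, a finite-dimensional `F`-vector space `V`, a quadratic form
`Q : V → F` with polar form `B = QuadraticMap.polar Q` (the bilinear map `Q.polarBilin`),
induced map `D = Q.polarBilin : V →ₗ[F] Module.Dual F V`, and radical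
`V^⊥ = LinearMap.ker Q.polarBilin`. -/

variable {F V : Type*} [Field F] [AddCommGroup V] [Module F V] [FiniteDimensional F V]

/-- The map `δ_{c*,f} : x ↦ x + ⟨c*,x⟩ • f`. -/
def deltaMap (c : Module.Dual F V) (f : V) : V →ₗ[F] V :=
  LinearMap.id + c.smulRight f

/-- The orthogonal group `O(V,Q)`, as a set of linear endomorphisms. -/
def orthSet (Q : QuadraticForm F V) : Set (V →ₗ[F] V) :=
  {φ | Function.Bijective φ ∧ ∀ x, Q (φ x) = Q x}

/-- The weak orthogonal group `O'(V,Q)`: isometries fixing the radical elementwise. -/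
def wOrthSet (Q : QuadraticForm F V) : Set (V →ₗ[F] V) :=
  {φ | Function.Bijective φ ∧ (∀ x, Q (φ x) = Q x) ∧
    ∀ x ∈ LinearMap.ker Q.polarBilin, φ x = x}

/-- The group `Δ(V,f) = {δ_{a*,f} : a* ∈ V*, ⟨a*,f⟩ ≠ -1}`. -/
def deltaSet (f : V) : Set (V →ₗ[F] V) :=
  {φ | ∃ a : Module.Dual F V, a f ≠ -1 ∧ φ = deltaMap a f}

/-- The `Q`-reflection `ξ_r : x ↦ x - Q(r)⁻¹ • B(r,x) • r` in the direction of `r`. -/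
noncomputable def xiMap (Q : QuadraticForm F V) (r : V) : V →ₗ[F] V :=
  LinearMap.id - (Q r)⁻¹ • (Q.polarBilin r).smulRight r

open QuadraticMap Module

lemma deltaMap_apply (a : Module.Dual F V) (f x : V) : deltaMap a f x = x + a x • f := rfl

lemma deltaMap_comp_apply (u w : Module.Dual F V) (f x : V) :
    deltaMap u f (deltaMap w f x) = x + (u x + w x + w x * u f) • f := by
  simp only [deltaMap_apply, map_add, LinearMap.map_smul, smul_eq_mul, add_smul, mul_smul]
  module

lemma deltaMap_bijective (a : Module.Dual F V) (f : V) (h : a f ≠ -1) :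
    Function.Bijective (deltaMap a f) := by
  have h1 : (1 : F) + a f ≠ 0 := fun h0 => h (by rwa [add_comm, add_eq_zero_iff_eq_neg] at h0)
  set b : Module.Dual F V := -(1 + a f)⁻¹ • a with hb
  have hb1 : ∀ x, b x = -(1 + a f)⁻¹ * a x := fun x => rfl
  refine Function.bijective_iff_has_inverse.mpr ⟨deltaMap b f, fun x => ?_, fun x => ?_⟩
  · rw [deltaMap_comp_apply]
    have : b x + a x + a x * b f = 0 := by
      rw [hb1, hb1]; field_simp; ring
    rw [this, zero_smul, add_zero]
  · rw [deltaMap_comp_apply]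
    have : a x + b x + b x * a f = 0 := by
      rw [hb1]; field_simp; ring
    rw [this, zero_smul, add_zero]

lemma Q_add (Q : QuadraticForm F V) (x y : V) : Q (x + y) = Q x + Q y + polar Q x y := by
  simp [QuadraticMap.polar]

lemma Q_deltaMap (Q : QuadraticForm F V) (a : Module.Dual F V) (f x : V) :
    Q (deltaMap a f x) = Q x + (a x * polar Q f x + a x * a x * Q f) := by
  rw [deltaMap_apply, Q_add, QuadraticMap.map_smul, polar_smul_right, polar_comm]
  simp only [smul_eq_mul]
  ring

lemma delta_isometry_iff (Q : QuadraticForm F V) (a : Module.Dual F V) (f : V) :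
    (∀ x, Q (deltaMap a f x) = Q x) ↔ ∀ x, a x * polar Q f x + a x * a x * Q f = 0 :=
  forall_congr' fun x => by rw [Q_deltaMap, add_eq_left]

lemma func_dichotomy (a b : Module.Dual F V) (h : ∀ x, a x = 0 ∨ a x = b x) : a = 0 ∨ a = b := by
  by_cases ha : a = 0
  · exact Or.inl ha
  · right
    obtain ⟨x₀, hx₀⟩ := DFunLike.ne_iff.mp ha
    have hx₀' : a x₀ ≠ 0 := by simpa using hx₀
    have hab : a x₀ = b x₀ := (h x₀).resolve_left hx₀'
    ext y
    rcases eq_or_ne (a y) 0 with hy | hy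
    · rcases h (x₀ + y) with h' | h'
      · rw [map_add, hy, add_zero] at h'; exact absurd h' hx₀'
      · rw [map_add, map_add, hy, add_zero, hab] at h'
        rw [hy, (left_eq_add.mp h').symm]
    · exact (h y).resolve_left hy

lemma func_prod_zero (a c : Module.Dual F V) (h : ∀ x, a x * c x = 0) : a = 0 ∨ c = 0 := by
  rcases func_dichotomy a (a - c) (fun x => by
    rcases mul_eq_zero.mp (h x) with h' | h'
    · exact Or.inl h'
    · right; simp [h']) with h' | h'
  · exact Or.inl h'
  · right
    have := sub_eq_zero.mpr h'.symm
    simpa [sub_sub_cancel_left] using this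

lemma polar_self_eq (Q : QuadraticForm F V) (f : V) : polar Q f f = 2 * Q f := by
  rw [QuadraticMap.polar, ← two_smul F, QuadraticMap.map_smul, smul_eq_mul]
  ring

lemma xi_apply_eq (Q : QuadraticForm F V) (f x : V) :
    (-(Q f)⁻¹ • Q.polarBilin f) x = -(Q f)⁻¹ * polar Q f x := by
  simp [QuadraticMap.polarBilin_apply_apply]

lemma xi_dual_apply_f (Q : QuadraticForm F V) (f : V) (hf : Q f ≠ 0) :
    (-(Q f)⁻¹ • Q.polarBilin f) f = -2 := by
  rw [xi_apply_eq, polar_self_eq]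
  field_simp

lemma neg_two_ne_neg_one : (-2 : F) ≠ -1 := by
  intro hc
  have h2 : (2 : F) = 1 := neg_inj.mp hc
  rw [← one_add_one_eq_two, add_eq_right] at h2
  exact one_ne_zero h2

lemma xi_mem_orth (Q : QuadraticForm F V) (f : V) (hf : Q f ≠ 0) :
    deltaMap (-(Q f)⁻¹ • Q.polarBilin f) f ∈ orthSet Q := by
  refine ⟨deltaMap_bijective _ _ ?_, (delta_isometry_iff Q _ f).mpr fun x => ?_⟩
  · rw [xi_dual_apply_f Q f hf]; exact neg_two_ne_neg_one
  · rw [xi_apply_eq]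
    field_simp
    ring

lemma key_dichotomy (Q₁ : QuadraticForm F V) (f : V) (hf : Q₁ f ≠ 0) (a : Module.Dual F V)
    (hiso : ∀ x, Q₁ (deltaMap a f x) = Q₁ x) :
    a = 0 ∨ a = -(Q₁ f)⁻¹ • Q₁.polarBilin f := by
  have H := (delta_isometry_iff Q₁ a f).mp hiso
  refine func_dichotomy a _ fun x => ?_
  have hx := H x
  have : a x * (polar Q₁ f x + a x * Q₁ f) = 0 := by linear_combination hx
  rcases mul_eq_zero.mp this with h' | h'
  · exact Or.inl h'
  · right
    rw [xi_apply_eq]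
    field_simp
    linear_combination h'

lemma nondeg_dual (Q₁ : QuadraticForm F V) (hrad : LinearMap.ker Q₁.polarBilin = ⊥)
    {v : V} (hv : v ≠ 0) : Q₁.polarBilin v ≠ 0 := by
  intro h0
  exact hv (by simpa [hrad] using LinearMap.mem_ker.mpr h0)

lemma aniso_ne_zero (Q₁ : QuadraticForm F V) {f : V} (hf : Q₁ f ≠ 0) : f ≠ 0 := by
  intro h
  exact hf (by rw [h]; exact QuadraticMap.map_zero Q₁)

lemma aniso_rel (Q₁ Q₂ : QuadraticForm F V) (hrad : LinearMap.ker Q₁.polarBilin = ⊥)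
    (hG : ∀ φ ∈ orthSet Q₁, ∀ x, Q₂ (φ x) = Q₂ x) (f : V) (hf : Q₁ f ≠ 0) :
    Q₂.polarBilin f = (Q₂ f * (Q₁ f)⁻¹) • Q₁.polarBilin f := by
  set a₁ : Module.Dual F V := -(Q₁ f)⁻¹ • Q₁.polarBilin f with ha₁def
  have H := (delta_isometry_iff Q₂ a₁ f).mp (hG _ (xi_mem_orth Q₁ f hf))
  have ha₁ : a₁ ≠ 0 :=
    smul_ne_zero (by simp [hf]) (nondeg_dual Q₁ hrad (aniso_ne_zero Q₁ hf))
  have hprod : ∀ x, a₁ x * ((Q₂.polarBilin f + Q₂ f • a₁) x) = 0 := fun x => by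
    have hx := H x
    simp only [LinearMap.add_apply, LinearMap.smul_apply, smul_eq_mul,
      QuadraticMap.polarBilin_apply_apply]
    linear_combination hx
  rcases func_prod_zero _ _ hprod with h | h
  · exact absurd h ha₁
  · have h2 : Q₂.polarBilin f = -(Q₂ f) • a₁ := by
      rw [add_eq_zero_iff_eq_neg] at h
      rw [h]
      module
    rw [h2, ha₁def, smul_smul]
    congr 1
    ring

lemma mk_eq_two_of (hF : ∀ t : F, t = 0 ∨ t = 1) : Cardinal.mk F = 2 :=
  Cardinal.mk_eq_two_iff.mpr ⟨0, 1, zero_ne_one,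
    Set.eq_univ_iff_forall.mpr fun t => by rcases hF t with h | h <;> simp [h]⟩

lemma mk_eq_three_of (c : F) (hc0 : c ≠ 0) (hc1 : c ≠ 1)
    (hF : ∀ t : F, t = 0 ∨ t = 1 ∨ t = c) : Cardinal.mk F = 3 := by
  have huniv : (Set.univ : Set F) = {0, 1, c} :=
    (Set.eq_univ_iff_forall.mpr fun t => by
      rcases hF t with h | h | h <;> simp [h]).symm
  have h0 : (0 : F) ∉ ({1, c} : Set F) := by
    simp only [Set.mem_insert_iff, Set.mem_singleton_iff]
    push_neg
    exact ⟨fun h => one_ne_zero h.symm, fun h => hc0 h.symm⟩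
  have h1 : (1 : F) ∉ ({c} : Set F) := by
    simp only [Set.mem_singleton_iff]
    exact fun h => hc1 h.symm
  calc Cardinal.mk F = Cardinal.mk (Set.univ : Set F) := Cardinal.mk_univ.symm
    _ = Cardinal.mk ({0, 1, c} : Set F) := by rw [huniv]
    _ = Cardinal.mk ({1, c} : Set F) + 1 := Cardinal.mk_insert h0
    _ = (Cardinal.mk ({c} : Set F) + 1) + 1 := by rw [Cardinal.mk_insert h1]
    _ = 3 := by rw [Cardinal.mk_singleton]; norm_num

lemma dim1_char2 (Q₁ : QuadraticForm F V) (hrad : LinearMap.ker Q₁.polarBilin = ⊥)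
    (hchar : (1 : F) + 1 = 0) {f : V} (hf : Q₁ f ≠ 0) (hn : Module.finrank F V = 1) :
    False := by
  have hf0 : f ≠ 0 := aniso_ne_zero Q₁ hf
  have hspan : Submodule.span F {f} = ⊤ := by
    apply Submodule.eq_top_of_finrank_eq
    rw [finrank_span_singleton hf0, hn]
  have hD : Q₁.polarBilin f = 0 := by
    ext x
    have hx : x ∈ Submodule.span F ({f} : Set V) := hspan ▸ Submodule.mem_top
    obtain ⟨c, rfl⟩ := Submodule.mem_span_singleton.mp hx
    simp only [QuadraticMap.polarBilin_apply_apply, LinearMap.zero_apply]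
    rw [polar_smul_right, polar_self_eq]
    rw [show (2 : F) = 1 + 1 from by norm_num, hchar]
    simp
  exact nondeg_dual Q₁ hrad hf0 hD

lemma span_contra (Q₁ : QuadraticForm F V) (hrad : LinearMap.ker Q₁.polarBilin = ⊥)
    (h2 : ¬(Module.finrank F V = 2 ∧ Cardinal.mk F = 2))
    (hex : ∃ g, Q₁ g ≠ 0) (a : Module.Dual F V) (ha : a ≠ 0)
    (hall : ∀ g, Q₁ g ≠ 0 → a g = 0) : False := by
  obtain ⟨g₀, hg₀⟩ := hex
  have s1 : ∀ x, a x ≠ 0 → Q₁ x = 0 := fun x hx => by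
    by_contra hQ; exact hx (hall x hQ)
  obtain ⟨u₀, hu₀⟩ : ∃ u, a u ≠ 0 := by
    obtain ⟨u, hu⟩ := DFunLike.ne_iff.mp ha; exact ⟨u, by simpa using hu⟩
  by_cases hF : ∀ t : F, t = 0 ∨ t = 1
  · -- |F| = 2 endgame
    have hchar : (1 : F) + 1 = 0 := by
      rcases hF (1 + 1) with h | h
      · exact h
      · exact absurd (add_eq_right.mp h) one_ne_zero
    have hneg : ∀ t : F, -t = t := fun t => by
      apply neg_eq_of_add_eq_zero_left
      calc t + t = (1 + 1) * t := by ring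
        _ = 0 := by rw [hchar, zero_mul]
    have s2 : ∀ u y, a u ≠ 0 → a y = 0 → polar Q₁ u y = Q₁ y := fun u y hu hy => by
      have h0 : Q₁ (u + y) = 0 := s1 _ (by rw [map_add, hy, add_zero]; exact hu)
      rw [Q_add, s1 u hu, zero_add] at h0
      calc polar Q₁ u y = -(Q₁ y) := by linear_combination h0
        _ = Q₁ y := hneg _
    have s3 : ∀ y, a y = 0 → Q₁.polarBilin y = Q₁ y • a := fun y hy => by
      ext x
      simp only [QuadraticMap.polarBilin_apply_apply, LinearMap.smul_apply, smul_eq_mul]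
      rcases eq_or_ne (a x) 0 with hx | hx
      · have e1 : polar Q₁ u₀ x = Q₁ x := s2 u₀ x hu₀ hx
        have hu₀y : a (u₀ + y) ≠ 0 := by rw [map_add, hy, add_zero]; exact hu₀
        have e2 : polar Q₁ (u₀ + y) x = Q₁ x := s2 _ x hu₀y hx
        rw [polar_add_left, e1] at e2
        rw [hx, mul_zero]
        linear_combination e2
      · have hx1 : a x = 1 := (hF (a x)).resolve_left hx
        rw [polar_comm, s2 x y hx hy, hx1, mul_one]
    have s4 : ∀ y, a y = 0 → y ≠ 0 → Q₁ y ≠ 0 := fun y hy hy0 hQ => by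
      apply nondeg_dual Q₁ hrad hy0
      rw [s3 y hy, hQ, zero_smul]
    have s5 : ∀ y z, a y = 0 → a z = 0 → y ≠ 0 → z ≠ 0 → y = z := by
      intro y z hy hz hy0 hz0
      have hQy : Q₁ y = 1 := (hF _).resolve_left (s4 y hy hy0)
      have hQz : Q₁ z = 1 := (hF _).resolve_left (s4 z hz hz0)
      have hyz : Q₁.polarBilin (y + z) = 0 := by
        rw [map_add, s3 y hy, s3 z hz, hQy, hQz, one_smul]
        calc a + a = ((1 : F) + 1) • a := by rw [add_smul, one_smul]
          _ = 0 := by rw [hchar, zero_smul]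
      have hmem : y + z = 0 := by
        have hm := LinearMap.mem_ker.mpr hyz
        rwa [hrad, Submodule.mem_bot] at hm
      have hy' : y = -z := add_eq_zero_iff_eq_neg.mp hmem
      rw [hy']
      apply neg_eq_of_add_eq_zero_left
      calc z + z = ((1 : F) + 1) • z := by rw [add_smul, one_smul]
        _ = 0 := by rw [hchar, zero_smul]
    set K := LinearMap.ker a with hKdef
    have hK1 : Module.finrank F K ≤ 1 := by
      by_cases hKbot : K = ⊥
      · rw [hKbot, finrank_bot]; omega
      · obtain ⟨w, hwK, hw0⟩ := (Submodule.ne_bot_iff K).mp hKbot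
        have hle : K ≤ Submodule.span F {w} := by
          intro y hyK
          rcases eq_or_ne y 0 with rfl | hy0
          · exact Submodule.zero_mem _
          · rw [s5 y w (LinearMap.mem_ker.mp hyK) (LinearMap.mem_ker.mp hwK) hy0 hw0]
            exact Submodule.mem_span_singleton_self w
        calc Module.finrank F K ≤ Module.finrank F (Submodule.span F ({w} : Set V)) :=
              Submodule.finrank_mono hle
          _ = 1 := finrank_span_singleton hw0
    have hrange : Module.finrank F (LinearMap.range a) ≤ 1 :=
      le_trans (Submodule.finrank_le _) (le_of_eq (Module.finrank_self F))
    have hn2 : Module.finrank F V ≤ 2 := by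
      have hrn := LinearMap.finrank_range_add_finrank_ker a
      rw [← hKdef] at hrn
      omega
    rcases (by omega : Module.finrank F V = 0 ∨ Module.finrank F V = 1 ∨
        Module.finrank F V = 2) with h0 | h1 | hdim2
    · have hz : ∀ x : V, x = 0 := finrank_zero_iff_forall_zero.mp h0
      exact hg₀ (by rw [hz g₀]; exact QuadraticMap.map_zero Q₁)
    · exact dim1_char2 Q₁ hrad hchar hg₀ h1
    · exact h2 ⟨hdim2, mk_eq_two_of hF⟩
  · push_neg at hF
    obtain ⟨c, hc0, hc1⟩ := hF
    have hQall : ∀ y, Q₁ y = 0 := by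
      intro y
      rcases eq_or_ne (a y) 0 with hy | hy
      · have key : ∀ t : F, t ≠ 0 → Q₁ y + t * polar Q₁ u₀ y = 0 := by
          intro t ht
          have hat : a (t • u₀ + y) ≠ 0 := by
            rw [map_add, LinearMap.map_smul, hy, add_zero, smul_eq_mul]
            exact mul_ne_zero ht hu₀
          have h0 := s1 _ hat
          rw [Q_add, QuadraticMap.map_smul, s1 u₀ hu₀, polar_smul_left] at h0
          simp only [smul_eq_mul] at h0
          linear_combination h0
        have k1 := key 1 one_ne_zero
        have kc := key c hc0
        have hp : polar Q₁ u₀ y = 0 := by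
          have hfac : (1 - c) * polar Q₁ u₀ y = 0 := by linear_combination k1 - kc
          rcases mul_eq_zero.mp hfac with h | h
          · exact absurd (by linear_combination -h : c = 1) hc1
          · exact h
        linear_combination k1 - hp
      · exact s1 y hy
    exact hg₀ (hQall g₀)

lemma hG_of_h (Q₁ Q₂ : QuadraticForm F V)
    (h : orthSet Q₁ = orthSet Q₂ ∨ orthSet Q₁ = wOrthSet Q₂) :
    ∀ φ ∈ orthSet Q₁, ∀ x, Q₂ (φ x) = Q₂ x := by
  rcases h with h | h <;> intro φ hφ
  · exact (h ▸ hφ).2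
  · exact (h ▸ hφ).2.1

lemma aniso_Q2_ne (Q₁ Q₂ : QuadraticForm F V)
    (hrad : LinearMap.ker Q₁.polarBilin = ⊥)
    (h1 : ¬(Module.finrank F V = 1 ∧ Cardinal.mk F = 3))
    (h2 : ¬(Module.finrank F V = 2 ∧ Cardinal.mk F = 2))
    (h : orthSet Q₁ = orthSet Q₂ ∨ orthSet Q₁ = wOrthSet Q₂)
    (f : V) (hf : Q₁ f ≠ 0) : Q₂ f ≠ 0 := by
  intro hQ2
  have hG := hG_of_h Q₁ Q₂ h
  have hrel := aniso_rel Q₁ Q₂ hrad hG f hf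
  rw [hQ2, zero_mul, zero_smul] at hrel
  set a₁ : Module.Dual F V := -(Q₁ f)⁻¹ • Q₁.polarBilin f with ha₁def
  have hf0 : f ≠ 0 := aniso_ne_zero Q₁ hf
  have ha₁ne : a₁ ≠ 0 := smul_ne_zero (by simp [hf]) (nondeg_dual Q₁ hrad hf0)
  have ha₁f : a₁ f = -2 := xi_dual_apply_f Q₁ f hf
  have key : ∀ a : Module.Dual F V, deltaMap a f ∈ orthSet Q₁ → a = 0 ∨ a = a₁ :=
    fun a hmem => key_dichotomy Q₁ f hf a hmem.2
  have hisoQ2 : ∀ a : Module.Dual F V, ∀ x, Q₂ (deltaMap a f x) = Q₂ x := by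
    intro a x
    rw [Q_deltaMap]
    have hpol : polar Q₂ f x = 0 := by
      rw [← QuadraticMap.polarBilin_apply_apply, hrel]
      rfl
    rw [hpol, hQ2]
    ring
  obtain ⟨x₀, hx₀⟩ : ∃ x, a₁ x ≠ 0 := by
    obtain ⟨x, hx⟩ := DFunLike.ne_iff.mp ha₁ne; exact ⟨x, by simpa using hx⟩
  have scalar_mem : ∀ t : F, t • a₁ = 0 ∨ t • a₁ = a₁ → t = 0 ∨ t = 1 := by
    intro t ht
    rcases ht with h' | h'
    · left
      have := DFunLike.congr_fun h' x₀
      simp only [LinearMap.smul_apply, smul_eq_mul, LinearMap.zero_apply] at this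
      exact (mul_eq_zero.mp this).resolve_right hx₀
    · right
      have := DFunLike.congr_fun h' x₀
      simp only [LinearMap.smul_apply, smul_eq_mul] at this
      have h'' : (t - 1) * a₁ x₀ = 0 := by linear_combination this
      have := (mul_eq_zero.mp h'').resolve_right hx₀
      linear_combination this
  rcases h with horth | hworth
  · -- O(Q₁) = O(Q₂)
    have hmem2 : ∀ a : Module.Dual F V, a f ≠ -1 → deltaMap a f ∈ orthSet Q₂ :=
      fun a haf => ⟨deltaMap_bijective a f haf, hisoQ2 a⟩
    have hdi : ∀ a : Module.Dual F V, a f ≠ -1 → a = 0 ∨ a = a₁ :=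
      fun a haf => key a (horth ▸ hmem2 a haf)
    -- the evaluation functional on the dual
    set ev : Module.Dual F V →ₗ[F] F := Module.Dual.eval F V f with hevdef
    have hev_apply : ∀ b : Module.Dual F V, ev b = b f := fun b => rfl
    obtain ⟨b₀, hb₀⟩ : ∃ b : Module.Dual F V, b f ≠ 0 := by
      by_contra hc
      push_neg at hc
      exact hf0 ((Module.forall_dual_apply_eq_zero_iff F f).mp hc)
    have hKdi : ∀ b : Module.Dual F V, b f = 0 → b = 0 ∨ b = a₁ := by
      intro b hbf
      apply hdi b
      rw [hbf]
      intro hc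
      exact one_ne_zero (neg_eq_zero.mp hc.symm)
    set K := LinearMap.ker ev with hKdef
    have hrange : Module.finrank F (LinearMap.range ev) ≤ 1 :=
      le_trans (Submodule.finrank_le _) (le_of_eq (Module.finrank_self F))
    have hrn := LinearMap.finrank_range_add_finrank_ker ev
    rw [← hKdef, Subspace.dual_finrank_eq] at hrn
    have hKmem : ∀ b : Module.Dual F V, b ∈ K ↔ b f = 0 := fun b => LinearMap.mem_ker
    by_cases hchar : (1 : F) + 1 = 0
    · -- char 2 : F = {0,1}, dim ≤ 2
      have hm2 : (-2 : F) = 0 := by linear_combination -hchar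
      have hF : ∀ t : F, t = 0 ∨ t = 1 := by
        intro t
        apply scalar_mem t
        apply hdi (t • a₁)
        rw [LinearMap.smul_apply, ha₁f, smul_eq_mul, hm2, mul_zero]
        intro hc
        exact one_ne_zero (neg_eq_zero.mp hc.symm)
      have hK1 : Module.finrank F K ≤ 1 := by
        have hle : K ≤ Submodule.span F {a₁} := by
          intro b hb
          rcases hKdi b ((hKmem b).mp hb) with rfl | rfl
          · exact Submodule.zero_mem _
          · exact Submodule.mem_span_singleton_self a₁
        calc Module.finrank F K ≤ Module.finrank F (Submodule.span F ({a₁} : Set (Module.Dual F V))) :=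
              Submodule.finrank_mono hle
          _ = 1 := finrank_span_singleton ha₁ne
      have hn2 : Module.finrank F V ≤ 2 := by omega
      rcases (by omega : Module.finrank F V = 0 ∨ Module.finrank F V = 1 ∨
          Module.finrank F V = 2) with h0 | hd1 | hd2
      · exact hf0 (finrank_zero_iff_forall_zero.mp h0 f)
      · exact dim1_char2 Q₁ hrad hchar hf hd1
      · exact h2 ⟨hd2, mk_eq_two_of hF⟩
    · -- char ≠ 2 : F = {0,1,2⁻¹}, dim = 1
      have hm2ne : (-2 : F) ≠ 0 := fun hc => hchar (by linear_combination -hc)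
      by_cases hF01 : ∀ t : F, t = 0 ∨ t = 1
      · rcases hF01 (1 + 1) with hcc | hcc
        · exact hchar hcc
        · exact one_ne_zero (add_eq_right.mp hcc)
      · push_neg at hF01
        obtain ⟨c, hc0, hc1⟩ := hF01
        have hc : ∀ s : F, s ≠ 0 → s ≠ 1 → -2 * s = -1 := by
          intro s hs0 hs1
          by_contra hne
          have hs := scalar_mem s (hdi (s • a₁) (by
            rw [LinearMap.smul_apply, ha₁f, smul_eq_mul]
            intro hcc
            exact hne (by linear_combination hcc)))
          tauto
        have hFall : ∀ t : F, t = 0 ∨ t = 1 ∨ t = c := by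
          intro t
          by_cases t0 : t = 0
          · exact Or.inl t0
          by_cases t1 : t = 1
          · exact Or.inr (Or.inl t1)
          refine Or.inr (Or.inr ?_)
          have h1t := hc t t0 t1
          have h1c := hc c hc0 hc1
          have hmul : (-2 : F) * (t - c) = 0 := by linear_combination h1t - h1c
          rcases mul_eq_zero.mp hmul with hh | hh
          · exact absurd hh hm2ne
          · linear_combination hh
        have hmk3 := mk_eq_three_of c hc0 hc1 hFall
        have hK0 : Module.finrank F K = 0 := by
          have hle : K ≤ ⊥ := by
            intro b hb
            rcases hKdi b ((hKmem b).mp hb) with rfl | rfl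
            · exact Submodule.zero_mem _
            · exact absurd ((hKmem a₁).mp hb) (by rw [ha₁f]; exact hm2ne)
          rw [le_bot_iff.mp hle, finrank_bot]
        rcases (by omega : Module.finrank F V = 0 ∨ Module.finrank F V = 1) with h0 | hd1
        · exact hf0 (finrank_zero_iff_forall_zero.mp h0 f)
        · exact h1 ⟨hd1, hmk3⟩
  · -- O(Q₁) = O'(Q₂)
    have hfR : f ∈ LinearMap.ker Q₂.polarBilin := LinearMap.mem_ker.mpr hrel
    have hξ : deltaMap a₁ f ∈ wOrthSet Q₂ := hworth ▸ xi_mem_orth Q₁ f hf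
    have hvan : ∀ x ∈ LinearMap.ker Q₂.polarBilin, a₁ x = 0 := by
      intro x hx
      have hfix := hξ.2.2 x hx
      rw [deltaMap_apply] at hfix
      have h0 : a₁ x • f = 0 := add_eq_left.mp hfix
      exact (smul_eq_zero.mp h0).resolve_right hf0
    have hallg : ∀ g, Q₁ g ≠ 0 → a₁ g = 0 := by
      intro g hg
      have hrelg := aniso_rel Q₁ Q₂ hrad hG g hg
      rcases eq_or_ne (Q₂ g) 0 with hQ2g | hQ2g
      · have hz : Q₂.polarBilin g = 0 := by rw [hrelg, hQ2g, zero_mul, zero_smul]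
        exact hvan g (LinearMap.mem_ker.mpr hz)
      · have hL : Q₂.polarBilin g f = 0 := by
          rw [QuadraticMap.polarBilin_apply_apply, polar_comm,
            ← QuadraticMap.polarBilin_apply_apply, hrel]
          rfl
        rw [hrelg] at hL
        simp only [LinearMap.smul_apply, smul_eq_mul] at hL
        have hgf : Q₁.polarBilin g f = 0 :=
          (mul_eq_zero.mp hL).resolve_left (mul_ne_zero hQ2g (inv_ne_zero hg))
        have hfg : polar Q₁ f g = 0 := by
          rw [polar_comm, ← QuadraticMap.polarBilin_apply_apply, hgf]
        rw [ha₁def, xi_apply_eq, hfg, mul_zero]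
    exact span_contra Q₁ hrad h2 ⟨f, hf⟩ a₁ ha₁ne hallg

lemma iso_Q2_zero (Q₁ Q₂ : QuadraticForm F V)
    (hrad : LinearMap.ker Q₁.polarBilin = ⊥)
    (h1 : ¬(Module.finrank F V = 1 ∧ Cardinal.mk F = 3))
    (h2 : ¬(Module.finrank F V = 2 ∧ Cardinal.mk F = 2))
    (h : orthSet Q₁ = orthSet Q₂ ∨ orthSet Q₁ = wOrthSet Q₂)
    (v : V) (hv : Q₁ v = 0) : Q₂ v = 0 := by
  rcases eq_or_ne v 0 with rfl | hv0
  · exact QuadraticMap.map_zero Q₂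
  by_contra hQ
  have hG := hG_of_h Q₁ Q₂ h
  rcases eq_or_ne (Q₂.polarBilin v) 0 with hD2 | hD2
  · -- all anisotropic vectors are B₁-orthogonal to v
    have haD : Q₁.polarBilin v ≠ 0 := nondeg_dual Q₁ hrad hv0
    have hex : ∃ g, Q₁ g ≠ 0 := by
      by_contra hc
      push_neg at hc
      apply haD
      ext x
      simp only [QuadraticMap.polarBilin_apply_apply, LinearMap.zero_apply, QuadraticMap.polar]
      rw [hc, hc, hc]
      ring
    have hall : ∀ g, Q₁ g ≠ 0 → Q₁.polarBilin v g = 0 := by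
      intro g hg
      have hrelg := aniso_rel Q₁ Q₂ hrad hG g hg
      have hQ2g := aniso_Q2_ne Q₁ Q₂ hrad h1 h2 h g hg
      have hL : Q₂.polarBilin g v = 0 := by
        rw [QuadraticMap.polarBilin_apply_apply, polar_comm,
          ← QuadraticMap.polarBilin_apply_apply, hD2]
        rfl
      rw [hrelg] at hL
      simp only [LinearMap.smul_apply, smul_eq_mul] at hL
      have hgv : Q₁.polarBilin g v = 0 :=
        (mul_eq_zero.mp hL).resolve_left (mul_ne_zero hQ2g (inv_ne_zero hg))
      rw [QuadraticMap.polarBilin_apply_apply, polar_comm,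
        ← QuadraticMap.polarBilin_apply_apply, hgv]
    exact span_contra Q₁ hrad h2 hex _ haD hall
  · -- the Q₂-reflection in direction v lies in O(Q₁)
    set a₂ : Module.Dual F V := -(Q₂ v)⁻¹ • Q₂.polarBilin v with ha₂def
    have hmem : deltaMap a₂ v ∈ orthSet Q₁ := by
      rcases h with horth | hworth
      · rw [horth]
        exact xi_mem_orth Q₂ v hQ
      · rw [hworth]
        have hx := xi_mem_orth Q₂ v hQ
        refine ⟨hx.1, hx.2, fun x hxR => ?_⟩
        rw [deltaMap_apply]
        have hz : a₂ x = 0 := by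
          have hp : polar Q₂ v x = 0 := by
            rw [polar_comm, ← QuadraticMap.polarBilin_apply_apply, LinearMap.mem_ker.mp hxR]
            rfl
          rw [ha₂def, xi_apply_eq, hp, mul_zero]
        rw [hz, zero_smul, add_zero]
    have H := (delta_isometry_iff Q₁ a₂ v).mp hmem.2
    have hprod : ∀ x, a₂ x * (Q₁.polarBilin v) x = 0 := by
      intro x
      have hx := H x
      rw [hv] at hx
      rw [QuadraticMap.polarBilin_apply_apply]
      linear_combination hx
    rcases func_prod_zero _ _ hprod with hA | hB
    · exact (smul_ne_zero (by simp [hQ]) hD2 : a₂ ≠ 0) hA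
    · exact (nondeg_dual Q₁ hrad hv0) hB

lemma lam_const (Q₁ Q₂ : QuadraticForm F V)
    (hrad : LinearMap.ker Q₁.polarBilin = ⊥)
    (h1 : ¬(Module.finrank F V = 1 ∧ Cardinal.mk F = 3))
    (h2 : ¬(Module.finrank F V = 2 ∧ Cardinal.mk F = 2))
    (h : orthSet Q₁ = orthSet Q₂ ∨ orthSet Q₁ = wOrthSet Q₂)
    (p q : V) (hp : Q₁ p ≠ 0) (hq : Q₁ q ≠ 0) : Q₂ p * Q₁ q = Q₂ q * Q₁ p := by
  have hG := hG_of_h Q₁ Q₂ h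
  have hrp := aniso_rel Q₁ Q₂ hrad hG p hp
  have hrq := aniso_rel Q₁ Q₂ hrad hG q hq
  suffices hαβ : Q₂ p * (Q₁ p)⁻¹ = Q₂ q * (Q₁ q)⁻¹ by
    field_simp at hαβ
    linear_combination hαβ
  by_cases hpq : Q₁.polarBilin p q = 0
  · by_cases hspan : q ∈ Submodule.span F ({p} : Set V)
    · obtain ⟨c, rfl⟩ := Submodule.mem_span_singleton.mp hspan
      rw [QuadraticMap.map_smul, QuadraticMap.map_smul]
      have hc : c ≠ 0 := by
        intro hc0
        exact hq (by rw [hc0, zero_smul]; exact QuadraticMap.map_zero Q₁)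
      field_simp
      ring
    · have hB2pq : Q₂.polarBilin p q = 0 := by
        rw [hrp, LinearMap.smul_apply, hpq, smul_zero]
      rcases eq_or_ne (Q₁ (p + q)) 0 with hsum | hsum
      · have h2sum : Q₂ (p + q) = 0 := iso_Q2_zero Q₁ Q₂ hrad h1 h2 h (p + q) hsum
        have e0 := Q_add Q₁ p q
        rw [hsum, ← QuadraticMap.polarBilin_apply_apply, hpq] at e0
        have e1 : Q₁ p + Q₁ q = 0 := by linear_combination -e0
        have e0' := Q_add Q₂ p q
        rw [h2sum, ← QuadraticMap.polarBilin_apply_apply, hB2pq] at e0'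
        have e2 : Q₂ p + Q₂ q = 0 := by linear_combination -e0'
        -- Q₂p/Q₁p = Q₂q/Q₁q  from  Q₂p = -Q₂q, Q₁p = -Q₁q
        field_simp
        linear_combination Q₂ p * e1 - Q₁ p * e2
      · have hrh := aniso_rel Q₁ Q₂ hrad hG (p + q) hsum
        set α := Q₂ p * (Q₁ p)⁻¹ with hα
        set β := Q₂ q * (Q₁ q)⁻¹ with hβ
        set γ := Q₂ (p + q) * (Q₁ (p + q))⁻¹ with hγ
        have hcomb : (α - γ) • Q₁.polarBilin p + (β - γ) • Q₁.polarBilin q = 0 := by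
          have hmap : Q₂.polarBilin (p + q) = Q₂.polarBilin p + Q₂.polarBilin q := map_add _ p q
          have hmap1 : Q₁.polarBilin (p + q) = Q₁.polarBilin p + Q₁.polarBilin q := map_add _ p q
          rw [hrh, hmap1, hrp, hrq] at hmap
          rw [smul_add] at hmap
          linear_combination (norm := module) (-1 : F) • hmap
        have hker : (α - γ) • p + (β - γ) • q ∈ LinearMap.ker Q₁.polarBilin := by
          rw [LinearMap.mem_ker, map_add, LinearMap.map_smul, LinearMap.map_smul]
          exact hcomb
        have hzero : (α - γ) • p + (β - γ) • q = 0 := by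
          rwa [hrad, Submodule.mem_bot] at hker
        have hβγ : β - γ = 0 := by
          by_contra hβγ
          apply hspan
          have h' : (β - γ) • q = -((α - γ) • p) := eq_neg_of_add_eq_zero_right hzero
          have hq' : q = (β - γ)⁻¹ • -((α - γ) • p) := by
            rw [← h', smul_smul, inv_mul_cancel₀ hβγ, one_smul]
          rw [hq', smul_neg, smul_smul, ← neg_smul]
          exact Submodule.smul_mem _ _ (Submodule.mem_span_singleton_self p)
        have hαγ : α - γ = 0 := by
          rw [hβγ, zero_smul, add_zero] at hzero
          rcases smul_eq_zero.mp hzero with h' | h'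
          · exact h'
          · exact absurd h' (aniso_ne_zero Q₁ hp)
        rw [sub_eq_zero] at hαγ hβγ
        rw [hαγ, hβγ]
  · have e1 : Q₂.polarBilin p q = (Q₂ p * (Q₁ p)⁻¹) * Q₁.polarBilin p q := by
      rw [hrp, LinearMap.smul_apply, smul_eq_mul]
    have e2 : Q₂.polarBilin q p = (Q₂ q * (Q₁ q)⁻¹) * Q₁.polarBilin q p := by
      rw [hrq, LinearMap.smul_apply, smul_eq_mul]
    have hsym2 : Q₂.polarBilin p q = Q₂.polarBilin q p := by
      simp only [QuadraticMap.polarBilin_apply_apply]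
      exact polar_comm _ p q
    have hsym1 : Q₁.polarBilin p q = Q₁.polarBilin q p := by
      simp only [QuadraticMap.polarBilin_apply_apply]
      exact polar_comm _ p q
    have hfac : (Q₂ p * (Q₁ p)⁻¹ - Q₂ q * (Q₁ q)⁻¹) * Q₁.polarBilin p q = 0 := by
      linear_combination -e1 + e2 + hsym2 - (Q₂ q * (Q₁ q)⁻¹) * hsym1
    rcases mul_eq_zero.mp hfac with h' | h'
    · linear_combination h'
    · exact absurd h' hpq

/-- Lemma 3.4: if `(V,Q₁)` has trivial radical, `¬(dim V = 1 ∧ |F| = 3)` and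
`¬(dim V = 2 ∧ |F| = 2)`, and `O(V,Q₁) = O(V,Q₂)` or `O(V,Q₁) = O'(V,Q₂)`, then
`Q₁ = c • Q₂` for some non-zero scalar `c`. -/
theorem stmt8 (Q₁ Q₂ : QuadraticForm F V)
    (hrad : LinearMap.ker Q₁.polarBilin = ⊥)
    (h1 : ¬(Module.finrank F V = 1 ∧ Cardinal.mk F = 3))
    (h2 : ¬(Module.finrank F V = 2 ∧ Cardinal.mk F = 2))
    (h : orthSet Q₁ = orthSet Q₂ ∨ orthSet Q₁ = wOrthSet Q₂) :
    ∃ c : F, c ≠ 0 ∧ Q₁ = c • Q₂ := by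
  by_cases hex : ∃ f, Q₁ f ≠ 0
  · obtain ⟨f₀, hf₀⟩ := hex
    have hQ2f₀ := aniso_Q2_ne Q₁ Q₂ hrad h1 h2 h f₀ hf₀
    refine ⟨Q₁ f₀ * (Q₂ f₀)⁻¹, mul_ne_zero hf₀ (inv_ne_zero hQ2f₀), ?_⟩
    ext x
    have hsmul : ((Q₁ f₀ * (Q₂ f₀)⁻¹) • Q₂) x = (Q₁ f₀ * (Q₂ f₀)⁻¹) * Q₂ x := by
      simp [QuadraticMap.smul_apply, smul_eq_mul]
    rw [hsmul]
    rcases eq_or_ne (Q₁ x) 0 with hx | hx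
    · rw [hx, iso_Q2_zero Q₁ Q₂ hrad h1 h2 h x hx, mul_zero]
    · have hc := lam_const Q₁ Q₂ hrad h1 h2 h x f₀ hx hf₀
      field_simp
      linear_combination -hc
  · push_neg at hex
    have hV : ∀ x : V, x = 0 := by
      intro x
      have hz : Q₁.polarBilin x = 0 := by
        ext y
        simp only [QuadraticMap.polarBilin_apply_apply, LinearMap.zero_apply,
          QuadraticMap.polar]
        rw [hex, hex, hex]
        ring
      have hm := LinearMap.mem_ker.mpr hz
      rwa [hrad, Submodule.mem_bot] at hm
    refine ⟨1, one_ne_zero, ?_⟩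
    ext x
    rw [hV x]
    simp
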